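/- There exists a compact hereditary family F on the first uncountable cardinal ω₁ (containing the empty set and all singletons) such that rk_F({α}) = α for every α < ω₁. -/

import Mathlib

open scoped Classical

noncomputable section

/-- Characteristic function of a finite set, as an element of the Cantor cube `2^ι`. -/
def chi {ι : Type*} (s : Finset ι) : ι → Bool := fun a => decide (a ∈ s)

/-- The copy of a collection of finite sets inside the Cantor cube `2^ι`. -/
def chiImg {ι : Type*} (F : Set (Finset ι)) : Set (ι → Bool) := chi '' F

/-- `F` is a family: it contains the empty set and all singletons. -/
def IsFam {ι : Type*} (F : Set (Finset ι)) : Prop := ∅ ∈ F ∧ ∀ a : ι, {a} ∈ F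

/-- `F` is hereditary: it is closed under subsets. -/
def IsHereditary {ι : Type*} (F : Set (Finset ι)) : Prop :=
  ∀ ⦃s t : Finset ι⦄, s ⊆ t → t ∈ F → s ∈ F

/-- `F` is compact: its copy in the Cantor cube `2^ι` is closed
(equivalently, compact). -/
def IsCompactFam {ι : Type*} (F : Set (Finset ι)) : Prop := IsClosed (chiImg F)

/-- The set of maximal elements of `F` with respect to inclusion. -/
def famMAX {ι : Type*} (F : Set (Finset ι)) : Set (Finset ι) :=
  {s ∈ F | ∀ t ∈ F, s ⊆ t → s = t}

/-- The image `{π[s] : s ∈ F}` of a collection of finite sets under a permutation of the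
index set. -/
def permImg {ι : Type*} (π : Equiv.Perm ι) (F : Set (Finset ι)) : Set (Finset ι) :=
  (fun s => Finset.image π s) '' F

/-- The `o`-th Cantor–Bendixson derivative of a set `A` in a topological space. -/
noncomputable def cbDeriv {X : Type*} [TopologicalSpace X] (A : Set X) (o : Ordinal) :
    Set X :=
  A ∩ ⋂ b : Set.Iio o, derivedSet (cbDeriv A b.1)
termination_by o
decreasing_by exact b.2

/-- The Cantor–Bendixson rank of a point `x` relative to a set `A`: the largest ordinal `o`
such that `x` belongs to the `o`-th Cantor–Bendixson derivative of `A`. -/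
noncomputable def cbRank {X : Type*} [TopologicalSpace X] (A : Set X) (x : X) : Ordinal :=
  sSup {o | x ∈ cbDeriv A o}

namespace S19
open Cardinal

universe u

abbrev I : Type (u + 1) := ↥(Set.Iio (Cardinal.aleph.{u} 1).ord)


lemma mk_omega1 : #I.{u} = Cardinal.lift.{u+1,u} (Cardinal.aleph 1) := by
  have := Ordinal.mk_Iio_ordinal (Cardinal.aleph 1).ord
  rwa [Cardinal.card_ord] at this

lemma aleph0_lt_mk_omega1 : ℵ₀ < #I.{u} := by
  rw [mk_omega1]
  have : (ℵ₀ : Cardinal.{u+1}) = Cardinal.lift.{u+1,u} ℵ₀ := by simp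
  rw [this, Cardinal.lift_lt]
  exact Cardinal.aleph0_lt_aleph_one

instance : Infinite I := by
  rw [Cardinal.infinite_iff]; exact aleph0_lt_mk_omega1.le

lemma mk_code : #(I.{u} × (Finset I.{u} × I.{u})) = #I.{u} := by
  rw [Cardinal.mk_prod, Cardinal.mk_prod, Cardinal.mk_finset_of_infinite, Cardinal.lift_id,
    Cardinal.lift_id]
  rw [Cardinal.mul_eq_self aleph0_lt_mk_omega1.le, Cardinal.mul_eq_self aleph0_lt_mk_omega1.le]

/-- every bounded subset of `I` is small -/
lemma mk_Iic_lt (β : I.{u}) : #{γ : I.{u} | γ ≤ β} < #I.{u} := by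
  have h1 : #{γ : I | γ ≤ β} ≤ #(Set.Iio (β.1 + 1)) := by
    refine Cardinal.mk_le_of_injective
      (f := fun γ : {γ : I | γ ≤ β} =>
        (⟨γ.1.1, show γ.1.1 < β.1 + 1 by
          rw [Ordinal.add_one_eq_succ]; exact Order.lt_succ_iff.mpr γ.2⟩ : Set.Iio (β.1 + 1))) ?_
    intro a b hab
    simp only [Subtype.mk.injEq] at hab
    exact Subtype.ext (Subtype.ext (congrArg (fun z => z.1) hab))
  have h2 : #(Set.Iio (β.1 + 1)) = Cardinal.lift.{u+1,u} (β.1 + 1).card :=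
    Ordinal.mk_Iio_ordinal _
  have h3 : (β.1 + 1).card < Cardinal.aleph 1 := by
    rw [← Cardinal.lt_ord]
    exact ((Cardinal.isSuccLimit_ord (Cardinal.aleph0_le_aleph 1)).succ_lt β.2)
  calc #{γ : I | γ ≤ β} ≤ _ := h1
    _ = _ := h2
    _ < #I := by rw [mk_omega1, Cardinal.lift_lt]; exact h3

lemma exists_unbounded (f : I.{u} → I.{u}) (hf : Function.Injective f) (β : I.{u}) :
    ∃ γ, β < f γ := by
  by_contra h
  push_neg at h
  have : #I ≤ #{γ : I | γ ≤ β} :=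
    Cardinal.mk_le_of_injective (f := fun γ => (⟨f γ, h γ⟩ : {γ : I | γ ≤ β}))
      (fun a b hab => hf (by simpa using hab))
  exact absurd this (not_le.mpr (mk_Iic_lt β))

def code : I.{u} ≃ I.{u} × (Finset I.{u} × I.{u}) := ((Cardinal.eq.1 mk_code).some).symm

def u (γ : I.{u}) : Finset I.{u} := (code γ).2.1
def d (γ : I.{u}) : I.{u} := (code γ).2.2

lemma exists_code (v : Finset I.{u}) (δ : I.{u}) (β : I.{u}) :
    ∃ γ : I.{u}, β < γ ∧ u γ = v ∧ d γ = δ := by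
  obtain ⟨γ0, hγ0⟩ := exists_unbounded (fun a => code.symm (a, (v, δ)))
    (fun a b hab => by
      have := congrArg code hab
      simpa using this) β
  exact ⟨code.symm (γ0, (v, δ)), hγ0, by simp [u], by simp [d]⟩




def Fam : Set (Finset I.{u}) :=
  {s | ∀ x ∈ s, ∀ y ∈ s, x < y → x ∈ u y ∧ d y < x ∧ ((∃ z ∈ s, z < x) → d y < d x)}

lemma empty_mem_Fam : ∅ ∈ Fam := by intro x hx; simp at hx

lemma singleton_mem_Fam (a : I) : {a} ∈ Fam := by
  intro x hx y hy hxy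
  simp only [Finset.mem_singleton] at hx hy
  subst hx; subst hy; exact absurd hxy (lt_irrefl _)

lemma Fam_hered : ∀ ⦃s t : Finset I⦄, s ⊆ t → t ∈ Fam → s ∈ Fam := by
  intro s t hsub ht x hx y hy hxy
  obtain ⟨h1, h2, h3⟩ := ht x (hsub hx) y (hsub hy) hxy
  exact ⟨h1, h2, fun ⟨z, hz, hzx⟩ => h3 ⟨z, hsub hz, hzx⟩⟩

def rho (s : Finset I.{u}) : Ordinal.{u} :=
  if h : s.Nonempty then (if s.card = 1 then (s.max' h).1 else (d (s.max' h)).1)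
  else (Cardinal.aleph 1).ord

lemma rho_empty : rho (∅ : Finset I) = (Cardinal.aleph 1).ord := by simp [rho]

lemma rho_singleton (a : I) : rho {a} = a.1 := by simp [rho]

lemma rho_lt {s : Finset I} (h : s.Nonempty) : rho s < (Cardinal.aleph 1).ord := by
  rw [rho, dif_pos h]
  split
  · exact (s.max' h).2
  · exact (d (s.max' h)).2

lemma rho_of_one_lt_card {s : Finset I} (h : 1 < s.card) :
    rho s = (d (s.max' (Finset.card_pos.mp (by omega)))).1 := by
  rw [rho, dif_pos (Finset.card_pos.mp (by omega)), if_neg (by omega)]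

lemma rich {s : Finset I} (hs : s ∈ Fam) {δ : Ordinal} (hδ : δ < rho s) (W : Finset I) :
    ∃ t ∈ Fam, s ⊆ t ∧ t ≠ s ∧ (∀ i ∈ t, i ∈ s ∨ i ∉ W) ∧ δ ≤ rho t := by
  have hδ1 : δ < (Cardinal.aleph 1).ord := by
    rcases s.eq_empty_or_nonempty with rfl | h
    · rwa [rho_empty] at hδ
    · exact lt_trans hδ (rho_lt h)
  set δ' : I := ⟨δ, hδ1⟩ with hδ'def
  obtain ⟨γ, hγgt, hγu, hγd⟩ := exists_code s δ' (((insert δ' W) ∪ s).max' (by simp))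
  have hγW : ∀ i ∈ W, i < γ := fun i hi =>
    lt_of_le_of_lt (Finset.le_max' _ _ (by simp [hi])) hγgt
  have hγs : ∀ i ∈ s, i < γ := fun i hi =>
    lt_of_le_of_lt (Finset.le_max' _ _ (by simp [hi])) hγgt
  have hγδ : δ' < γ := lt_of_le_of_lt (Finset.le_max' _ _ (by simp)) hγgt
  have hγns : γ ∉ s := fun hh => absurd (hγs γ hh) (lt_irrefl _)
  rcases s.eq_empty_or_nonempty with rfl | h
  · refine ⟨{γ}, singleton_mem_Fam γ, by simp, by simp, ?_, ?_⟩
    · intro i hi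
      simp only [Finset.mem_singleton] at hi
      exact Or.inr (hi ▸ fun hW => absurd (hγW γ hW) (lt_irrefl _))
    · rw [rho_singleton]
      exact le_of_lt hγδ
  -- s nonempty
  set m := s.max' h with hmdef
  have hms : m ∈ s := s.max'_mem h
  have hles : ∀ x ∈ s, x ≤ m := fun x hx => Finset.le_max' s x hx
  -- key bound : d γ = δ' is below everything relevant
  have hdm : s.card ≠ 1 → δ' < d m ∧ d m < s.min' h := by
    intro hc
    have hc2 : 1 < s.card := lt_of_le_of_ne (Finset.Nonempty.card_pos h) (Ne.symm hc)
    have hmin : s.min' h < m := Finset.min'_lt_max'_of_card s hc2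
    have := (hs (s.min' h) (s.min'_mem h) m hms hmin).2.1
    constructor
    · have : rho s = (d m).1 := rho_of_one_lt_card hc2
      rw [this] at hδ
      exact Subtype.coe_lt_coe.mp (by exact_mod_cast hδ)
    · exact this
  have hδx : ∀ x ∈ s, δ' < x := by
    intro x hx
    by_cases hc : s.card = 1
    · obtain ⟨a, rfl⟩ := Finset.card_eq_one.mp hc
      have hxa : x = a := Finset.mem_singleton.mp hx
      subst hxa
      rw [rho_singleton] at hδ
      exact Subtype.coe_lt_coe.mp (by exact_mod_cast hδ)
    · obtain ⟨h1, h2⟩ := hdm hc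
      exact lt_trans h1 (lt_of_lt_of_le h2 (s.min'_le x hx))
  refine ⟨insert γ s, ?_, Finset.subset_insert γ s, ?_, ?_, ?_⟩
  · -- membership in Fam
    intro x hx y hy hxy
    rcases Finset.mem_insert.mp hy with rfl | hys
    · -- y = γ
      have hxs : x ∈ s := by
        rcases Finset.mem_insert.mp hx with rfl | h'
        · exact absurd hxy (lt_irrefl _)
        · exact h'
      refine ⟨by rw [hγu]; exact hxs, by rw [hγd]; exact hδx x hxs, ?_⟩
      rintro ⟨z, hz, hzx⟩
      have hzs : z ∈ s := by
        rcases Finset.mem_insert.mp hz with rfl | h'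
        · exact absurd (lt_trans hzx (hγs x hxs)) (lt_irrefl _)
        · exact h'
      -- z ∈ s, z < x : so s has two elements, card ≠ 1
      have hc : s.card ≠ 1 := by
        intro hc
        obtain ⟨a, rfl⟩ := Finset.card_eq_one.mp hc
        have := Finset.mem_singleton.mp hzs
        have := Finset.mem_singleton.mp hxs
        subst_vars
        exact absurd hzx (lt_irrefl _)
      obtain ⟨h1, _⟩ := hdm hc
      rw [hγd]
      rcases eq_or_lt_of_le (hles x hxs) with rfl | hxm
      · exact h1
      · exact lt_trans h1 ((hs x hxs m hms hxm).2.2 ⟨z, hzs, hzx⟩)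
    · -- y ∈ s
      have hxs : x ∈ s := by
        rcases Finset.mem_insert.mp hx with rfl | h'
        · exact absurd (lt_trans (hγs y hys) hxy) (lt_irrefl _)
        · exact h'
      obtain ⟨h1, h2, h3⟩ := hs x hxs y hys hxy
      refine ⟨h1, h2, ?_⟩
      rintro ⟨z, hz, hzx⟩
      have hzs : z ∈ s := by
        rcases Finset.mem_insert.mp hz with rfl | h'
        · exact absurd (lt_trans (hγs x hxs) hzx) (lt_irrefl _)
        · exact h'
      exact h3 ⟨z, hzs, hzx⟩
  · intro hh
    exact hγns (hh ▸ Finset.mem_insert_self γ s)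
  · intro i hi
    rcases Finset.mem_insert.mp hi with rfl | h'
    · exact Or.inr (fun hW => absurd (hγW i hW) (lt_irrefl _))
    · exact Or.inl h'
  · -- rho of insert γ s
    have hne : (insert γ s).Nonempty := ⟨γ, Finset.mem_insert_self γ s⟩
    have hcard : 1 < (insert γ s).card := by
      rw [Finset.card_insert_of_notMem hγns]
      have := Finset.Nonempty.card_pos h
      omega
    have hmax : (insert γ s).max' hne = γ := by
      apply le_antisymm
      · apply Finset.max'_le
        intro y hy
        rcases Finset.mem_insert.mp hy with rfl | h'
        · exact le_refl _
        · exact (hγs y h').le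
      · exact Finset.le_max' _ _ (Finset.mem_insert_self γ s)
    rw [rho_of_one_lt_card hcard]
    rw [hmax, hγd]

lemma isol {s : Finset I} (hs : s ∈ Fam) :
    ∃ W : Finset I, ∀ t ∈ Fam, s ⊆ t → (∀ i ∈ t, i ∈ s ∨ i ∉ W) → rho s ≤ rho t → t = s := by
  rcases s.eq_empty_or_nonempty with rfl | h
  · refine ⟨∅, fun t ht _ _ hrho => ?_⟩
    by_contra hne
    have htne : t.Nonempty := Finset.nonempty_iff_ne_empty.2 hne
    rw [rho_empty] at hrho
    exact absurd hrho (not_le.mpr (rho_lt htne))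
  · set m := s.max' h with hmdef
    have hms : m ∈ s := s.max'_mem h
    refine ⟨u m \ s, fun t ht hsub havoid hrho => ?_⟩
    have htne : t.Nonempty := h.mono hsub
    set M := t.max' htne with hMdef
    have hmM : m ≤ M := Finset.le_max' t m (hsub hms)
    rcases eq_or_lt_of_le hmM with heq | hlt
    · -- M = m : t ⊆ s
      apply Finset.Subset.antisymm _ hsub
      intro γ hγ
      by_contra hγs
      have hγM : γ ≤ M := Finset.le_max' t γ hγ
      have hγm : γ < m := lt_of_le_of_ne (heq ▸ hγM) (fun hh => hγs (hh ▸ hms))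
      have h1 := (ht γ hγ m (hsub hms) hγm).1
      rcases havoid γ hγ with h' | h'
      · exact hγs h'
      · exact h' (Finset.mem_sdiff.mpr ⟨h1, hγs⟩)
    · -- m < M : rho t < rho s, contradiction
      exfalso
      have hMt : M ∈ t := t.max'_mem htne
      have hmt : m ∈ t := hsub hms
      have hcard : 1 < t.card := Finset.one_lt_card.mpr ⟨m, hmt, M, hMt, ne_of_lt hlt⟩
      have hrt : rho t = (d M).1 := by
        rw [rho_of_one_lt_card hcard]
      by_cases hc : s.card = 1
      · obtain ⟨a, rfl⟩ := Finset.card_eq_one.mp hc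
        have hma : m = a := Finset.mem_singleton.mp hms
        have h2 := (ht m hmt M hMt hlt).2.1
        rw [rho_singleton, ← hma] at hrho
        rw [hrt] at hrho
        exact absurd hrho (not_le.mpr (by exact_mod_cast h2))
      · have hc2 : 1 < s.card := lt_of_le_of_ne (Finset.Nonempty.card_pos h) (Ne.symm hc)
        have hmin : s.min' h < m := Finset.min'_lt_max'_of_card s hc2
        have h3 := (ht m hmt M hMt hlt).2.2 ⟨s.min' h, hsub (s.min'_mem h), hmin⟩
        rw [rho_of_one_lt_card hc2, hrt] at hrho
        exact absurd hrho (not_le.mpr (by exact_mod_cast h3))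

lemma exists_strictMono_in {S : Set I} (hS : S.Infinite) :
    ∃ f : ℕ → I, StrictMono f ∧ ∀ n, f n ∈ S := by
  have wf : WellFounded ((· < ·) : I → I → Prop) := IsWellFounded.wf
  have hne : ∀ v : Finset I, (S \ ↑v).Nonempty := fun v =>
    Set.Infinite.nonempty (hS.diff v.finite_toSet)
  let pick : Finset I → I := fun v : Finset I => wf.min (S \ (↑v : Set I)) (hne v)
  have pick_mem : ∀ v : Finset I, pick v ∈ S \ (↑v : Set I) := fun v => wf.min_mem _ (hne v)
  have pick_min : ∀ (v : Finset I) (x : I), x ∈ S \ (↑v : Set I) → ¬ x < pick v := fun v x hx => wf.not_lt_min _ hx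
  let g : ℕ → Finset I := fun n => Nat.rec ∅ (fun _ v => insert (pick v) v) n
  have hgsub : ∀ n, g n ⊆ g (n + 1) := fun n => Finset.subset_insert _ _
  let f : ℕ → I := fun n => pick (g n)
  have hmem : ∀ n, f n ∈ S := fun n => (pick_mem (g n)).1
  have hlt : ∀ n, f n < f (n + 1) := by
    intro n
    have h1 : f (n + 1) ∈ S \ (↑(g (n + 1)) : Set I) := pick_mem _
    have h2 : f (n + 1) ∈ S \ {a : I | a ∈ g n} := by
      refine ⟨h1.1, fun hh => h1.2 ?_⟩
      exact (Finset.coe_subset.mpr (hgsub n)) hh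
    have h3 : ¬ f (n + 1) < f n := pick_min (g n) _ h2
    have h4 : f (n + 1) ≠ f n := by
      intro hh
      exact h1.2 (by
        rw [hh]
        exact Finset.mem_coe.mpr (Finset.mem_insert_self _ _))
    rcases lt_trichotomy (f n) (f (n + 1)) with h | h | h
    · exact h
    · exact absurd h.symm h4
    · exact absurd h h3
  exact ⟨f, strictMono_nat_of_lt_succ hlt, hmem⟩

lemma no_strictAnti (f : ℕ → I) (hf : ∀ n, f (n + 1) < f n) : False := by
  have wf : WellFounded ((· < ·) : I → I → Prop) := IsWellFounded.wf
  obtain ⟨n, hn⟩ := wf.min_mem (Set.range f) (Set.range_nonempty f)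
  exact wf.not_lt_min (Set.range f) ⟨n + 1, rfl⟩ (hn ▸ hf n)


lemma chi_inj : Function.Injective (chi : Finset I → I → Bool) := by
  intro s t hst
  ext a
  have := congrFun hst a
  simpa [chi] using this

lemma mem_derivedSet_iff {X : Type*} [TopologicalSpace X] {A : Set X} {x : X} :
    x ∈ derivedSet A ↔ x ∈ closure (A \ {x}) := by
  rw [mem_derivedSet, accPt_principal_iff_clusterPt, mem_closure_iff_clusterPt]

lemma isOpen_cyl (s W : Finset I) :
    IsOpen {y : I → Bool | (∀ i ∈ s, y i = true) ∧ ∀ i ∈ W, y i = false} := by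
  have h1 : {y : I → Bool | (∀ i ∈ s, y i = true) ∧ ∀ i ∈ W, y i = false}
      = (⋂ i ∈ s, (fun y : I → Bool => y i) ⁻¹' {true}) ∩
        ⋂ i ∈ W, (fun y : I → Bool => y i) ⁻¹' {false} := by
    ext y
    simp [Set.mem_iInter]
  rw [h1]
  refine IsOpen.inter ?_ ?_ <;>
  · apply isOpen_biInter_finset
    intro i _
    exact (continuous_apply i).isOpen_preimage _ (isOpen_discrete _)

lemma mem_cbDeriv_iff {X : Type*} [TopologicalSpace X] (A : Set X) (o : Ordinal) (x : X) :
    x ∈ cbDeriv A o ↔ x ∈ A ∧ ∀ b < o, x ∈ derivedSet (cbDeriv A b) := by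
  rw [cbDeriv]
  simp only [Set.mem_inter_iff, Set.mem_iInter]
  constructor
  · rintro ⟨h1, h2⟩
    exact ⟨h1, fun b hb => h2 ⟨b, hb⟩⟩
  · rintro ⟨h1, h2⟩
    exact ⟨h1, fun b => h2 b.1 b.2⟩

lemma deriv_eq (ξ : Ordinal) :
    cbDeriv (chiImg Fam) ξ = {x | ∃ s ∈ Fam, ξ ≤ rho s ∧ x = chi s} := by
  induction ξ using Ordinal.induction with
  | h ξ IH =>
  ext x
  rw [mem_cbDeriv_iff]
  constructor
  · rintro ⟨hxA, hder⟩
    obtain ⟨s, hsF, rfl⟩ := hxA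
    refine ⟨s, hsF, ?_, rfl⟩
    by_contra hlt
    push_neg at hlt
    have hx2 := hder (rho s) hlt
    rw [IH (rho s) hlt, mem_derivedSet_iff] at hx2
    obtain ⟨W, hW⟩ := isol hsF
    set U := {y : I → Bool | (∀ i ∈ s, y i = true) ∧ ∀ i ∈ W \ s, y i = false} with hUdef
    have hUo : IsOpen U := isOpen_cyl s (W \ s)
    have hxU : chi s ∈ U := by
      constructor
      · intro i hi
        simp [chi, hi]
      · intro i hi
        simp only [chi, decide_eq_false_iff_not]
        exact (Finset.mem_sdiff.mp hi).2
    obtain ⟨y, hyU, hy⟩ := mem_closure_iff.mp hx2 U hUo hxU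
    obtain ⟨hymem, hyne⟩ := hy
    obtain ⟨t, htF, htrho, rfl⟩ := hymem
    have hsub : s ⊆ t := by
      intro i hi
      have := hyU.1 i hi
      simpa [chi] using this
    have havoid : ∀ i ∈ t, i ∈ s ∨ i ∉ W := by
      intro i hit
      by_cases his : i ∈ s
      · exact Or.inl his
      · refine Or.inr fun hiW => ?_
        have := hyU.2 i (Finset.mem_sdiff.mpr ⟨hiW, his⟩)
        simp [chi, hit] at this
    have hts := hW t htF hsub havoid htrho
    exact hyne (by rw [hts]; rfl)
  · rintro ⟨s, hsF, hξρ, rfl⟩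
    refine ⟨⟨s, hsF, rfl⟩, ?_⟩
    intro b hb
    rw [IH b hb, mem_derivedSet_iff, mem_closure_iff]
    intro U hUo hxU
    obtain ⟨I0, u0, hu0, hsubU⟩ := isOpen_pi_iff.mp hUo (chi s) hxU
    obtain ⟨t, htF, hsub, htne, havoid, hrho⟩ := rich hsF (lt_of_lt_of_le hb hξρ) I0
    refine ⟨chi t, ?_, ⟨t, htF, hrho, rfl⟩, ?_⟩
    · apply hsubU
      rw [Set.mem_pi]
      intro i hiI0
      have hiI0' : i ∈ I0 := Finset.mem_coe.mp hiI0
      have hti : chi t i = chi s i := by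
        by_cases his : i ∈ s
        · simp [chi, his, hsub his]
        · have hnt : i ∉ t := by
            intro hit
            rcases havoid i hit with h' | h'
            · exact his h'
            · exact h' hiI0'
          simp [chi, his, hnt]
      rw [hti]
      exact (hu0 i hiI0').2
    · simp only [Set.mem_singleton_iff]
      intro hh
      exact htne (chi_inj hh)

lemma closed_chiImg : IsClosed (chiImg Fam) := by
  apply isClosed_of_closure_subset
  intro x hx
  have hfin : ∀ v : Finset I, (∀ i ∈ v, x i = true) → v ∈ Fam := by
    intro v hv
    have hU : IsOpen {y : I → Bool | ∀ i ∈ v, y i = true} := by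
      have := isOpen_cyl v ∅
      simpa using this
    obtain ⟨y, hyU, hyA⟩ := mem_closure_iff.mp hx _ hU hv
    obtain ⟨t, htF, rfl⟩ := hyA
    have hvt : v ⊆ t := by
      intro i hi
      have := hyU i hi
      simpa [chi] using this
    exact Fam_hered hvt htF
  have hSfin : {i : I | x i = true}.Finite := by
    by_contra hinf
    obtain ⟨f, hfmono, hfS⟩ := exists_strictMono_in hinf
    have key : ∀ n : ℕ, d (f (n + 1 + 1)) < d (f (n + 1)) := by
      intro n
      have hv : ({f 0, f (n+1), f (n+2)} : Finset I) ∈ Fam := by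
        apply hfin
        intro i hi
        simp only [Finset.mem_insert, Finset.mem_singleton] at hi
        rcases hi with rfl | rfl | rfl
        · exact hfS 0
        · exact hfS (n+1)
        · exact hfS (n+2)
      have h01 : f 0 < f (n+1) := hfmono (by omega)
      have h12 : f (n+1) < f (n+2) := hfmono (by omega)
      exact (hv (f (n+1)) (by simp) (f (n+2)) (by simp) h12).2.2 ⟨f 0, by simp, h01⟩
    exact no_strictAnti (fun n => d (f (n + 1))) key
  refine ⟨hSfin.toFinset, hfin _ (fun i hi => hSfin.mem_toFinset.mp hi), ?_⟩
  funext i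
  simp only [chi]
  by_cases hi : x i = true
  · simp [hSfin.mem_toFinset, hi]
  · have hxi : x i = false := by
      cases h : x i
      · rfl
      · exact absurd h hi
    rw [hxi]
    simp only [decide_eq_false_iff_not, hSfin.mem_toFinset]
    intro hmem
    exact hi hmem


end S19

/-- There is a compact hereditary family `F` on `ω₁` such that
`rk_F({α}) = α` for every `α < ω₁`. -/
theorem statement19 :
    ∃ F : Set (Finset ↥(Set.Iio (Cardinal.aleph 1).ord)),
      IsFam F ∧ IsCompactFam F ∧ IsHereditary F ∧
        ∀ a : ↥(Set.Iio (Cardinal.aleph 1).ord),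
          cbRank (chiImg F) (chi ({a} : Finset ↥(Set.Iio (Cardinal.aleph 1).ord))) = a.1 := by
  refine ⟨S19.Fam, ⟨S19.empty_mem_Fam, S19.singleton_mem_Fam⟩, S19.closed_chiImg,
    S19.Fam_hered, ?_⟩
  intro a
  have hset : {o | chi ({a} : Finset S19.I) ∈ cbDeriv (chiImg S19.Fam) o} = Set.Iic a.1 := by
    ext o
    rw [Set.mem_setOf_eq, S19.deriv_eq]
    constructor
    · rintro ⟨s, hsF, hle, heq⟩
      have hsa : s = {a} := S19.chi_inj heq.symm
      subst hsa
      rw [S19.rho_singleton] at hle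
      exact hle
    · intro h
      exact ⟨{a}, S19.singleton_mem_Fam a, by rwa [S19.rho_singleton], rfl⟩
  rw [cbRank, hset, csSup_Iic]
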